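/- Generating function for dual Horadam quaternions: in the ring of formal power series over the dual quaternions, (1 − pX − qX²) · (Σₙ Ĝₙ Xⁿ) = Ĝ₀ + (Ĝ₁ − p·Ĝ₀)·X; equivalently, the generating function of the sequence (Ĝₙ) is (Ĝ₀ + (Ĝ₁ − p·Ĝ₀)t)/(1 − pt − qt²). -/

import Mathlib

open Quaternion DualNumber TrivSqZeroExt

/-- The Horadam sequence `w(a,b;p,q)`: `w₀ = a`, `w₁ = b`,
`wₙ = p·wₙ₋₁ + q·wₙ₋₂` for `n ≥ 2`. -/
def horadam (a b p q : ℝ) : ℕ → ℝ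
  | 0 => a
  | 1 => b
  | n + 2 => p * horadam a b p q (n + 1) + q * horadam a b p q n

/-- The `n`-th Horadam quaternion `Gₙ = wₙ + wₙ₊₁·i + wₙ₊₂·j + wₙ₊₃·k`. -/
def horadamQ (a b p q : ℝ) (n : ℕ) : ℍ[ℝ] :=
  ⟨horadam a b p q n, horadam a b p q (n + 1), horadam a b p q (n + 2), horadam a b p q (n + 3)⟩

/-- The `n`-th dual Horadam quaternion `Ĝₙ = Gₙ + Gₙ₊₁·ε`, an element of the
dual numbers over `ℍ[ℝ]`, where `ε² = 0`. -/
noncomputable def dualHoradamQ (a b p q : ℝ) (n : ℕ) : DualNumber ℍ[ℝ] :=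
  inl (horadamQ a b p q n) + inl (horadamQ a b p q (n + 1)) * ε

lemma horadam_rec (a b p q : ℝ) (n : ℕ) :
    horadam a b p q (n + 2) = p * horadam a b p q (n + 1) + q * horadam a b p q n := rfl

lemma horadamQ_rec (a b p q : ℝ) (n : ℕ) :
    horadamQ a b p q (n + 2) = p • horadamQ a b p q (n + 1) + q • horadamQ a b p q n := by
  have h1 : n + 2 + 1 = n + 1 + 2 := by omega
  have h3 : n + 2 + 3 = n + 3 + 2 := by omega
  have h4 : n + 3 + 1 = n + 1 + 3 := by omega
  ext <;> simp [horadamQ, h1, h3, h4, horadam_rec, smul_eq_mul] <;> rfl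

lemma dualHoradamQ_rec (a b p q : ℝ) (n : ℕ) :
    dualHoradamQ a b p q (n + 2) =
      p • dualHoradamQ a b p q (n + 1) + q • dualHoradamQ a b p q n := by
  have h := horadamQ_rec a b p q
  refine TrivSqZeroExt.ext ?_ ?_ <;>
    simp [dualHoradamQ, show n + 2 + 1 = n + 1 + 2 from rfl, h]

set_option maxHeartbeats 1000000 in
set_option synthInstance.maxHeartbeats 400000 in
open PowerSeries in
/-- Generating function for dual Horadam quaternions: in the power series ring over the
dual quaternions, `(1 − pX − qX²)·(Σₙ Ĝₙ Xⁿ) = Ĝ₀ + (Ĝ₁ − p·Ĝ₀)·X`. -/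
theorem dualHoradamQ_generating_function (a b p q : ℝ) :
    (1 - C (R := DualNumber ℍ[ℝ]) (algebraMap ℝ _ p) * X -
        C (R := DualNumber ℍ[ℝ]) (algebraMap ℝ _ q) * X ^ 2) *
      PowerSeries.mk (fun n => dualHoradamQ a b p q n) =
    C (R := DualNumber ℍ[ℝ]) (dualHoradamQ a b p q 0) +
      C (R := DualNumber ℍ[ℝ]) (dualHoradamQ a b p q 1 - p • dualHoradamQ a b p q 0) * X := by
  have hsmul : ∀ (r : ℝ) (x : DualNumber ℍ[ℝ]), algebraMap ℝ (DualNumber ℍ[ℝ]) r * x = r • x :=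
    fun r x => (Algebra.smul_def r x).symm
  refine PowerSeries.ext fun n => ?_
  match n with
  | 0 =>
    rw [coeff_zero_eq_constantCoeff, RingHom.map_mul, RingHom.map_sub, RingHom.map_sub,
      RingHom.map_mul, RingHom.map_mul, map_one, RingHom.map_pow, constantCoeff_X,
      constantCoeff_mk, RingHom.map_add, RingHom.map_mul, constantCoeff_C, constantCoeff_C,
      constantCoeff_X, mul_zero, mul_zero]
    norm_num
  | 1 =>
    rw [sub_mul, sub_mul, one_mul, mul_assoc, mul_assoc, map_sub, map_sub, coeff_mk,
      coeff_C_mul, coeff_C_mul, show (1:ℕ) = 0 + 1 from rfl, coeff_succ_X_mul, coeff_mk,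
      coeff_X_pow_mul', if_neg (by omega), mul_zero, sub_zero, map_add, coeff_C,
      if_neg (by omega), coeff_C_mul, coeff_X, if_pos rfl, mul_one, hsmul]
    exact (zero_add _).symm
  | (n + 2) =>
    rw [sub_mul, sub_mul, one_mul, mul_assoc, mul_assoc, map_sub, map_sub, coeff_mk,
      coeff_C_mul, coeff_C_mul, coeff_succ_X_mul, coeff_mk,
      show n + 2 = n + 2 from rfl, coeff_X_pow_mul, coeff_mk, map_add, coeff_C,
      if_neg (by omega), coeff_C_mul, coeff_X, if_neg (by omega), mul_zero, zero_add,
      dualHoradamQ_rec, hsmul, hsmul]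
    abel
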